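/- Let q be an odd prime power, t ≥ 1 and n ≥ 2 integers, and M = (𝔽_q^{n×n})^t. If t ≢ 1 (mod q) and t ≢ 2 (mod q), then there exists no perfect linear sum-rank code in M with minimum distance d ∈ {5, 6}. -/

import Mathlib

open Matrix

/-- The sum-rank weight of a tuple of matrices. -/
noncomputable def sumRankW {F : Type} [Field F] {t n m : ℕ}
    (X : Fin t → Matrix (Fin n) (Fin m) F) : ℕ :=
  ∑ i, (X i).rank

/-- The number of tuples of matrices of sum-rank weight at most `r`
(the volume of a sum-rank ball of radius `r`). -/
noncomputable def ballVol (F : Type) [Field F] [Fintype F] (t n m r : ℕ) : ℕ :=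
  Nat.card {X : Fin t → Matrix (Fin n) (Fin m) F // sumRankW X ≤ r}

/-- `d` is the minimum sum-rank distance of the linear code `C`:
`d` is the least sum-rank weight of a nonzero codeword of `C`
(in particular `C` contains a nonzero element). -/
def IsMinDist {F : Type} [Field F] {t n : ℕ}
    (C : Submodule F (Fin t → Matrix (Fin n) (Fin n) F)) (d : ℕ) : Prop :=
  IsLeast {w | ∃ x ∈ C, x ≠ 0 ∧ sumRankW x = w} d

/-- The linear code `C` with minimum distance `d` is perfect:
`|C| · V_{⌊(d-1)/2⌋} = |M|`. -/
def IsPerfect (F : Type) [Field F] [Fintype F] {t n : ℕ}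
    (C : Submodule F (Fin t → Matrix (Fin n) (Fin n) F)) (d : ℕ) : Prop :=
  Nat.card C * ballVol F t n n ((d - 1) / 2) =
    Nat.card (Fin t → Matrix (Fin n) (Fin n) F)


namespace SumRankAux

variable {F : Type} [Field F] [Fintype F]

section CountMod
variable {V : Type} [AddCommGroup V] [Module F V] [Fintype V] [DecidableEq V]

lemma card_dvd_of_line (w : V) (hw : w ≠ 0) (A : Finset V)
    (hA : ∀ v ∈ A, ∀ c : F, v + c • w ∈ A) :
    Fintype.card F ∣ A.card := by
  classical
  set π : V → V ⧸ Submodule.span F {w} := Submodule.Quotient.mk with hπ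
  have hmap : ∀ v ∈ A, π v ∈ A.image π := fun v hv => Finset.mem_image_of_mem _ hv
  rw [Finset.card_eq_sum_card_fiberwise hmap]
  refine Finset.dvd_sum fun y hy => ?_
  obtain ⟨v₀, hv₀A, hv₀⟩ := Finset.mem_image.mp hy
  have hfib : A.filter (fun v => π v = y) = Finset.univ.image (fun c : F => v₀ + c • w) := by
    ext v
    simp only [Finset.mem_filter, Finset.mem_image, Finset.mem_univ, true_and]
    constructor
    · rintro ⟨hvA, hvy⟩
      have hmem : v - v₀ ∈ Submodule.span F {w} :=
        (Submodule.Quotient.eq _).mp (hvy.trans hv₀.symm)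
      obtain ⟨c, hc⟩ := Submodule.mem_span_singleton.mp hmem
      exact ⟨c, by rw [hc]; abel⟩
    · rintro ⟨c, rfl⟩
      refine ⟨hA v₀ hv₀A c, ?_⟩
      rw [← hv₀, hπ]
      show Submodule.Quotient.mk _ = Submodule.Quotient.mk _
      rw [Submodule.Quotient.eq]
      simpa using Submodule.smul_mem _ c (Submodule.mem_span_singleton_self w)
  have hinj : Function.Injective (fun c : F => v₀ + c • w) := by
    intro a b hab
    simp only [add_right_inj] at hab
    exact smul_left_injective F hw hab
  rw [hfib, Finset.card_image_of_injective _ hinj, Finset.card_univ]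

lemma card_modEq_filter (L : V →ₗ[F] V) (hL : ∀ v, L (L v) = 0) (S : Finset V)
    (hS : ∀ v ∈ S, ∀ c : F, v + c • L v ∈ S) :
    S.card ≡ (S.filter fun v => L v = 0).card [MOD Fintype.card F] := by
  classical
  have hsplit := Finset.card_filter_add_card_filter_not (s := S)
    (p := fun v => L v = 0)
  have hdvd : Fintype.card F ∣ (S.filter fun v => ¬ L v = 0).card := by
    set S₁ := S.filter (fun v => ¬ L v = 0) with hS₁
    have hmap : ∀ v ∈ S₁, L v ∈ S₁.image L := fun v hv => Finset.mem_image_of_mem _ hv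
    rw [Finset.card_eq_sum_card_fiberwise hmap]
    refine Finset.dvd_sum fun w hw => ?_
    obtain ⟨v₁, hv₁, hv₁w⟩ := Finset.mem_image.mp hw
    have hw0 : w ≠ 0 := by
      rw [hS₁, Finset.mem_filter] at hv₁
      rw [← hv₁w]; exact hv₁.2
    refine card_dvd_of_line w hw0 _ ?_
    intro v hv c
    rw [Finset.mem_filter] at hv ⊢
    rw [hS₁, Finset.mem_filter] at hv ⊢
    obtain ⟨⟨hvS, hv0⟩, hvw⟩ := hv
    have h1 : v + c • w ∈ S := by
      have := hS v hvS c
      rwa [← hvw]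
    have h2 : L (v + c • w) = w := by
      rw [map_add, _root_.map_smul, ← hvw, hL, smul_zero, add_zero, hvw]
    refine ⟨⟨h1, ?_⟩, h2⟩
    rw [h2]; exact hw0
  obtain ⟨k, hk⟩ := hdvd
  show S.card % _ = _ % _
  rw [← hsplit, hk, mul_comm, Nat.add_mul_mod_self_right]

lemma card_modEq_filter_all {ι : Type} [DecidableEq ι] (L : ι → V →ₗ[F] V)
    (hL : ∀ a v, L a (L a v) = 0)
    (hcomm : ∀ a b v, L a v = 0 → L a (L b v) = 0)
    (S : Finset V) (hS : ∀ a, ∀ v ∈ S, ∀ c : F, v + c • L a v ∈ S)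
    (s : Finset ι) :
    S.card ≡ (S.filter fun v => ∀ a ∈ s, L a v = 0).card [MOD Fintype.card F] := by
  classical
  induction s using Finset.induction_on with
  | empty => simpa using Nat.ModEq.refl S.card
  | @insert b s hb ih =>
    refine ih.trans ?_
    have hclosed : ∀ v ∈ S.filter (fun v => ∀ a ∈ s, L a v = 0), ∀ c : F,
        v + c • L b v ∈ S.filter (fun v => ∀ a ∈ s, L a v = 0) := by
      intro v hv c
      rw [Finset.mem_filter] at hv ⊢
      refine ⟨hS b v hv.1 c, fun a ha => ?_⟩
      have h0 := hv.2 a ha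
      rw [map_add, _root_.map_smul, h0, hcomm a b v h0, smul_zero, add_zero]
    have h2 := card_modEq_filter (L b) (hL b) _ hclosed
    refine h2.trans ?_
    rw [Finset.filter_filter]
    have : (S.filter fun v => (∀ a ∈ s, L a v = 0) ∧ L b v = 0)
        = S.filter fun v => ∀ a ∈ insert b s, L a v = 0 := by
      apply Finset.filter_congr
      intro v _
      simp only [Finset.forall_mem_insert]
      tauto
    rw [this]

end CountMod
end SumRankAux


namespace SumRankAux2
variable {F : Type} [Field F] [Fintype F]

lemma one_sub_mul_one_add {n : ℕ} (E : Matrix (Fin n) (Fin n) F) (hE : E * E = 0) (c : F) :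
    (1 - c • E) * (1 + c • E) = 1 := by
  have : E * c • E = 0 := by rw [mul_smul_comm, hE, smul_zero]
  rw [sub_mul, mul_add, mul_add, one_mul, mul_one, smul_mul_assoc, this, smul_zero]
  simp

lemma one_add_mul_one_sub {n : ℕ} (E : Matrix (Fin n) (Fin n) F) (hE : E * E = 0) (c : F) :
    (1 + c • E) * (1 - c • E) = 1 := by
  have : E * c • E = 0 := by rw [mul_smul_comm, hE, smul_zero]
  rw [add_mul, mul_sub, mul_sub, one_mul, mul_one, smul_mul_assoc, this, smul_zero]
  simp

lemma rank_one_add_smul_mul {n : ℕ} (E A : Matrix (Fin n) (Fin n) F) (hE : E * E = 0) (c : F) :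
    ((1 + c • E) * A).rank = A.rank := by
  refine le_antisymm (rank_mul_le_right _ _) ?_
  have key : (1 - c • E) * ((1 + c • E) * A) = A := by
    rw [← mul_assoc, one_sub_mul_one_add E hE c, one_mul]
  calc A.rank = ((1 - c • E) * ((1 + c • E) * A)).rank := by rw [key]
    _ ≤ ((1 + c • E) * A).rank := rank_mul_le_right _ _

lemma rank_mul_one_add_smul {n : ℕ} (E A : Matrix (Fin n) (Fin n) F) (hE : E * E = 0) (c : F) :
    (A * (1 + c • E)).rank = A.rank := by
  refine le_antisymm (rank_mul_le_left _ _) ?_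
  have key : (A * (1 + c • E)) * (1 - c • E) = A := by
    rw [mul_assoc, one_add_mul_one_sub E hE c, mul_one]
  calc A.rank = ((A * (1 + c • E)) * (1 - c • E)).rank := by rw [key]
    _ ≤ (A * (1 + c • E)).rank := rank_mul_le_left _ _

lemma stdBasis00_eq_diagonal {n : ℕ} [NeZero n] (c : F) :
    Matrix.single (0 : Fin n) (0 : Fin n) c = diagonal (Pi.single 0 c) := by
  ext a b
  simp only [Matrix.single, of_apply, diagonal_apply, Pi.single_apply]
  split_ifs with h1 h2 h3 <;> first | rfl | (exfalso; omega) | (exfalso; exact (by omega : False)) | skip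
  all_goals (exfalso; obtain ⟨ha, hb⟩ := h1; subst ha; subst hb; simp_all)

lemma rank_stdBasis00_ne {n : ℕ} [NeZero n] (c : F) (hc : c ≠ 0) :
    (Matrix.single (0 : Fin n) (0 : Fin n) c).rank = 1 := by
  classical
  rw [stdBasis00_eq_diagonal, Matrix.rank_diagonal, Fintype.card_eq_one_iff]
  refine ⟨⟨0, by simpa using hc⟩, ?_⟩
  rintro ⟨i, hi⟩
  apply Subtype.ext
  by_contra h
  exact hi (by simp [Pi.single_apply, (by simpa using h : i ≠ 0)])

lemma rank_stdBasis00_zero {n : ℕ} [NeZero n] :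
    (Matrix.single (0 : Fin n) (0 : Fin n) (0 : F)).rank = 0 := by
  rw [Matrix.single_zero, Matrix.rank_zero]

end SumRankAux2

namespace SumRankAux3
open SumRankAux2

variable {F : Type} [Field F] [Fintype F] [DecidableEq F] {t n : ℕ} [NeZero n]

abbrev MV (F : Type) [Field F] (t n : ℕ) := Fin t → Matrix (Fin n) (Fin n) F

abbrev OpIdx (t n : ℕ) [NeZero n] := Fin t × {j : Fin n // j ≠ (0 : Fin n)} × Bool

def Lop (a : OpIdx t n) : MV F t n →ₗ[F] MV F t n :=
  (LinearMap.single F (fun _ : Fin t => Matrix (Fin n) (Fin n) F) a.1) ∘ₗ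
    (if a.2.2 then LinearMap.mulLeft F (Matrix.single (0 : Fin n) a.2.1.1 (1:F))
     else LinearMap.mulRight F (Matrix.single a.2.1.1 (0 : Fin n) (1:F))) ∘ₗ
    (LinearMap.proj a.1)

lemma Lop_apply (a : OpIdx t n) (X : MV F t n) :
    Lop a X = Pi.single a.1 (if a.2.2 then Matrix.single (0 : Fin n) a.2.1.1 (1:F) * X a.1
      else X a.1 * Matrix.single a.2.1.1 (0 : Fin n) (1:F)) := by
  rcases a with ⟨i, j, b⟩
  cases b <;> simp [Lop, LinearMap.mulLeft_apply, LinearMap.mulRight_apply]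

lemma single_eq_zero' {ι : Type} [DecidableEq ι] {M : ι → Type*} [∀ i, AddCommMonoid (M i)]
    {i : ι} {v : M i} (h : Pi.single i v = 0) : v = 0 := by
  have := congrFun h i
  simpa using this

lemma Estd_sq_left (j : {j : Fin n // j ≠ (0 : Fin n)}) :
    (Matrix.single (0 : Fin n) j.1 (1:F)) * (Matrix.single (0 : Fin n) j.1 (1:F)) = 0 :=
  Matrix.single_mul_single_of_ne _ _ _ _ j.2 _

lemma Estd_sq_right (j : {j : Fin n // j ≠ (0 : Fin n)}) :
    (Matrix.single j.1 (0 : Fin n) (1:F)) * (Matrix.single j.1 (0 : Fin n) (1:F)) = 0 :=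
  Matrix.single_mul_single_of_ne _ _ _ _ (Ne.symm j.2) _

lemma Lop_sq (a : OpIdx t n) (X : MV F t n) : Lop a (Lop a X) = 0 := by
  rcases a with ⟨i, j, b⟩
  rw [Lop_apply, Lop_apply]
  cases b <;> simp only [if_true, if_false, Bool.false_eq_true, ite_false, ite_true] <;>
    rw [Pi.single_eq_same]
  · rw [mul_assoc, Estd_sq_right j, mul_zero, Pi.single_zero]
  · rw [← mul_assoc, Estd_sq_left j, zero_mul, Pi.single_zero]

lemma Lop_comm (a b : OpIdx t n) (X : MV F t n) (h : Lop a X = 0) :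
    Lop a (Lop b X) = 0 := by
  rcases a with ⟨i, j, ba⟩
  rcases b with ⟨i', j', bb⟩
  rw [Lop_apply] at h ⊢
  rw [Lop_apply]
  rcases eq_or_ne i i' with rfl | hii
  · rw [Pi.single_eq_same]
    have h0 := single_eq_zero' h
    cases ba <;> cases bb <;>
      simp only [if_true, if_false, Bool.false_eq_true, ite_false, ite_true] at h0 ⊢
    · rw [mul_assoc, Matrix.single_mul_single_of_ne _ _ _ _ (Ne.symm j.2), mul_zero,
        Pi.single_zero]
    · rw [mul_assoc, h0, mul_zero, Pi.single_zero]
    · rw [← mul_assoc, h0, zero_mul, Pi.single_zero]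
    · rw [← mul_assoc, Matrix.single_mul_single_of_ne _ _ _ _ j.2, zero_mul, Pi.single_zero]
  · rw [Pi.single_eq_of_ne hii]
    cases ba <;>
      simp only [if_true, if_false, Bool.false_eq_true, ite_false, ite_true]
    · rw [zero_mul, Pi.single_zero]
    · rw [mul_zero, Pi.single_zero]

lemma sumRankW_flow (a : OpIdx t n) (X : MV F t n) (c : F) :
    sumRankW (X + c • Lop a X) = sumRankW X := by
  rcases a with ⟨i, j, b⟩
  unfold sumRankW
  apply Finset.sum_congr rfl
  intro k _
  rw [Pi.add_apply, Pi.smul_apply, Lop_apply]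
  rcases eq_or_ne k i with rfl | hk
  · rw [Pi.single_eq_same]
    cases b <;> simp only [if_true, if_false, Bool.false_eq_true, ite_false, ite_true]
    · have : X k + c • (X k * Matrix.single j.1 (0 : Fin n) (1:F))
          = X k * (1 + c • Matrix.single j.1 (0 : Fin n) (1:F)) := by
        rw [mul_add, mul_one, mul_smul_comm]
      rw [this, rank_mul_one_add_smul _ _ (Estd_sq_right j) c]
    · have : X k + c • (Matrix.single (0 : Fin n) j.1 (1:F) * X k)
          = (1 + c • Matrix.single (0 : Fin n) j.1 (1:F)) * X k := by
        rw [add_mul, one_mul, smul_mul_assoc]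
      rw [this, rank_one_add_smul_mul _ _ (Estd_sq_left j) c]
  · rw [Pi.single_eq_of_ne hk, smul_zero, add_zero]

lemma fixed_struct (X : MV F t n) (h : ∀ a : OpIdx t n, Lop a X = 0) (i : Fin t) :
    X i = Matrix.single (0 : Fin n) (0 : Fin n) (X i 0 0) := by
  ext a b
  rcases eq_or_ne a 0 with rfl | ha
  · rcases eq_or_ne b 0 with rfl | hb
    · rw [Matrix.single_apply_same]
    · have h0 := h (i, ⟨b, hb⟩, false)
      rw [Lop_apply] at h0
      simp only [if_false, Bool.false_eq_true, ite_false] at h0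
      have h1 := single_eq_zero' h0
      have h2 := congrFun (congrFun h1 0) 0
      rw [Matrix.mul_single_apply_same] at h2
      simp only [Matrix.single, of_apply]
      rw [if_neg (by tauto)]
      simpa using h2
  · have h0 := h (i, ⟨a, ha⟩, true)
    rw [Lop_apply] at h0
    simp only [ite_true] at h0
    have h1 := single_eq_zero' h0
    have h2 := congrFun (congrFun h1 0) b
    rw [Matrix.single_mul_apply_same] at h2
    simp only [Matrix.single, of_apply]
    rw [if_neg (by tauto)]
    simpa using h2

lemma fixed_of_form (x : Fin t → F) (a : OpIdx t n) :
    Lop a (fun i => Matrix.single (0 : Fin n) (0 : Fin n) (x i)) = 0 := by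
  rcases a with ⟨i, j, b⟩
  rw [Lop_apply]
  cases b <;> simp only [if_true, if_false, Bool.false_eq_true, ite_false, ite_true]
  · rw [Matrix.single_mul_single_of_ne _ _ _ _ (Ne.symm j.2), Pi.single_zero]
  · rw [Matrix.single_mul_single_of_ne _ _ _ _ j.2, Pi.single_zero]

lemma sumRank_form (x : Fin t → F) :
    sumRankW (fun i => Matrix.single (0 : Fin n) (0 : Fin n) (x i))
      = (Finset.univ.filter fun i => x i ≠ 0).card := by
  unfold sumRankW
  rw [Finset.card_filter]
  apply Finset.sum_congr rfl
  intro i _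
  show (Matrix.single (0 : Fin n) (0 : Fin n) (x i)).rank = if x i ≠ 0 then 1 else 0
  rcases eq_or_ne (x i) 0 with h | h
  · rw [h, rank_stdBasis00_zero, if_neg (by simp)]
  · rw [rank_stdBasis00_ne _ h, if_pos h]

lemma fixed_card :
    ((Finset.univ : Finset (MV F t n)).filter
        fun X => sumRankW X ≤ 2 ∧ ∀ a : OpIdx t n, Lop a X = 0).card
      = (Finset.univ.filter
          fun x : Fin t → F => (Finset.univ.filter fun i => x i ≠ 0).card ≤ 2).card := by
  apply Finset.card_nbij' (fun X i => X i 0 0) (fun x i => Matrix.single (0 : Fin n) (0 : Fin n) (x i))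
  · intro X hX
    rw [Finset.mem_coe, Finset.mem_filter] at hX ⊢
    obtain ⟨-, hw, hfix⟩ := hX
    refine ⟨Finset.mem_univ _, ?_⟩
    have hform : X = fun i => Matrix.single (0 : Fin n) (0 : Fin n) (X i 0 0) :=
      funext fun i => fixed_struct X hfix i
    rw [hform, sumRank_form] at hw
    exact hw
  · intro x hx
    rw [Finset.mem_coe, Finset.mem_filter] at hx ⊢
    refine ⟨Finset.mem_univ _, ?_, fun a => fixed_of_form x a⟩
    rw [sumRank_form]
    exact hx.2
  · intro X hX
    rw [Finset.mem_coe, Finset.mem_filter] at hX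
    exact (funext fun i => (fixed_struct X hX.2.2 i).symm)
  · intro x hx
    funext i
    simp

lemma ball_modEq_hamming :
    ((Finset.univ : Finset (MV F t n)).filter fun X => sumRankW X ≤ 2).card
      ≡ (Finset.univ.filter
          fun x : Fin t → F => (Finset.univ.filter fun i => x i ≠ 0).card ≤ 2).card
        [MOD Fintype.card F] := by
  have h := SumRankAux.card_modEq_filter_all (F := F) (Lop (t := t) (n := n)) Lop_sq Lop_comm
    ((Finset.univ : Finset (MV F t n)).filter fun X => sumRankW X ≤ 2)
    (fun a X hX c => by
      rw [Finset.mem_filter] at hX ⊢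
      exact ⟨Finset.mem_univ _, by rw [sumRankW_flow]; exact hX.2⟩)
    Finset.univ
  refine h.trans ?_
  rw [Finset.filter_filter]
  have : ((Finset.univ : Finset (MV F t n)).filter
        fun X => sumRankW X ≤ 2 ∧ ∀ a ∈ (Finset.univ : Finset (OpIdx t n)), Lop a X = 0)
      = (Finset.univ.filter fun X => sumRankW X ≤ 2 ∧ ∀ a : OpIdx t n, Lop a X = 0) := by
    apply Finset.filter_congr
    intro X _
    simp
  rw [this, fixed_card]

lemma hamming_card (t : ℕ) :
    ((Finset.univ : Finset (Fin t → F)).filter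
        fun x => (Finset.univ.filter fun i => x i ≠ 0).card ≤ 2).card
      = ∑ k ∈ Finset.range 3, t.choose k * (Fintype.card F - 1)^k := by
  classical
  set T := ((Finset.univ : Finset (Fin t)).powerset.filter (fun s => s.card ≤ 2)) with hT
  have hmap : ∀ x ∈ ((Finset.univ : Finset (Fin t → F)).filter
      fun x => (Finset.univ.filter fun i => x i ≠ 0).card ≤ 2),
      (Finset.univ.filter fun i => x i ≠ 0) ∈ T := by
    intro x hx
    rw [Finset.mem_filter] at hx
    rw [hT, Finset.mem_filter, Finset.mem_powerset]
    exact ⟨Finset.filter_subset _ _, hx.2⟩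
  rw [Finset.card_eq_sum_card_fiberwise hmap]
  have hfib : ∀ s ∈ T,
      (((Finset.univ : Finset (Fin t → F)).filter
        fun x => (Finset.univ.filter fun i => x i ≠ 0).card ≤ 2).filter
          (fun x => (Finset.univ.filter fun i => x i ≠ 0) = s)).card
      = (Fintype.card F - 1)^s.card := by
    intro s hs
    rw [hT, Finset.mem_filter] at hs
    have hset : (((Finset.univ : Finset (Fin t → F)).filter
        fun x => (Finset.univ.filter fun i => x i ≠ 0).card ≤ 2).filter
          (fun x => (Finset.univ.filter fun i => x i ≠ 0) = s))
        = Fintype.piFinset (fun i => if i ∈ s then Finset.univ.erase (0:F) else {0}) := by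
      ext x
      rw [Finset.mem_filter, Finset.mem_filter, Fintype.mem_piFinset]
      constructor
      · rintro ⟨⟨-, hw⟩, hsupp⟩
        intro i
        by_cases hi : i ∈ s
        · rw [if_pos hi, Finset.mem_erase]
          rw [← hsupp, Finset.mem_filter] at hi
          exact ⟨hi.2, Finset.mem_univ _⟩
        · rw [if_neg hi, Finset.mem_singleton]
          rw [← hsupp] at hi
          by_contra hxi
          exact hi (Finset.mem_filter.mpr ⟨Finset.mem_univ _, hxi⟩)
      · intro hx
        have hsupp : (Finset.univ.filter fun i => x i ≠ 0) = s := by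
          ext i
          rw [Finset.mem_filter]
          specialize hx i
          by_cases hi : i ∈ s
          · rw [if_pos hi, Finset.mem_erase] at hx
            exact ⟨fun _ => hi, fun _ => ⟨Finset.mem_univ _, hx.1⟩⟩
          · rw [if_neg hi, Finset.mem_singleton] at hx
            constructor
            · rintro ⟨-, hxi⟩; exact absurd hx hxi
            · intro h; exact absurd h hi
        refine ⟨⟨Finset.mem_univ _, ?_⟩, hsupp⟩
        rw [hsupp]; exact hs.2
    rw [hset, Fintype.card_piFinset]
    have hcards : ∀ i : Fin t, ((if i ∈ s then Finset.univ.erase (0:F) else {0}).card)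
        = if i ∈ s then Fintype.card F - 1 else 1 := by
      intro i
      split_ifs
      · rw [Finset.card_erase_of_mem (Finset.mem_univ _), Finset.card_univ]
      · rw [Finset.card_singleton]
    rw [Finset.prod_congr rfl (fun i _ => hcards i)]
    rw [Finset.prod_ite_mem Finset.univ s (fun _ => Fintype.card F - 1), Finset.univ_inter,
      Finset.prod_const]
  rw [Finset.sum_congr rfl hfib]
  have hmap2 : ∀ s ∈ T, s.card ∈ Finset.range 3 := by
    intro s hs
    rw [hT, Finset.mem_filter] at hs
    rw [Finset.mem_range]
    omega
  rw [← Finset.sum_fiberwise_of_maps_to hmap2 (fun s => (Fintype.card F - 1)^s.card)]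
  apply Finset.sum_congr rfl
  intro k hk
  have hTk : T.filter (fun s => s.card = k) = Finset.powersetCard k Finset.univ := by
    ext s
    rw [Finset.mem_filter, hT, Finset.mem_filter, Finset.mem_powerset, Finset.mem_powersetCard]
    rw [Finset.mem_range] at hk
    constructor
    · rintro ⟨⟨hsub, -⟩, hc⟩; exact ⟨hsub, hc⟩
    · rintro ⟨hsub, hc⟩; exact ⟨⟨hsub, by omega⟩, hc⟩
  rw [hTk]
  rw [Finset.sum_congr rfl (fun s hs => by
    rw [(Finset.mem_powersetCard.mp hs).2])]
  rw [Finset.sum_const, Finset.card_powersetCard, Finset.card_univ, Fintype.card_fin,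
    smul_eq_mul]

end SumRankAux3

theorem stmt_9 (F : Type) [Field F] [Fintype F] (q t n : ℕ)
    (hq : Fintype.card F = q) (hodd : Odd q) (ht : 1 ≤ t) (hn : 2 ≤ n)
    (ht1 : ¬ t ≡ 1 [MOD q]) (ht2 : ¬ t ≡ 2 [MOD q]) :
    ¬ ∃ (C : Submodule F (Fin t → Matrix (Fin n) (Fin n) F)) (d : ℕ),
        IsMinDist C d ∧ IsPerfect F C d ∧ (d = 5 ∨ d = 6) := by
  rintro ⟨C, d, hmin, hperf, hd⟩
  haveI : NeZero n := ⟨by omega⟩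
  haveI : NeZero t := ⟨by omega⟩
  haveI : NeZero q := ⟨by have := Fintype.one_lt_card (α := F); omega⟩
  letI : DecidableEq F := Classical.decEq F
  have hq2 : 2 ≤ q := by have := Fintype.one_lt_card (α := F); omega
  have hrad : (d - 1) / 2 = 2 := by rcases hd with rfl | rfl <;> norm_num
  rw [IsPerfect, hrad] at hperf
  -- the volume as a Finset card
  have hVcard : ballVol F t n n 2 = ((Finset.univ : Finset (Fin t → Matrix (Fin n) (Fin n) F)).filter
      fun X => sumRankW X ≤ 2).card := by
    rw [ballVol, Nat.card_eq_fintype_card, Fintype.card_subtype]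
  -- cardinalities are powers of q
  letI : Fintype C := Fintype.ofFinite C
  have hMcard : Nat.card (Fin t → Matrix (Fin n) (Fin n) F)
      = q ^ Module.finrank F (Fin t → Matrix (Fin n) (Fin n) F) := by
    rw [Nat.card_eq_fintype_card, Module.card_eq_pow_finrank (K := F), hq]
  have hCcard : Nat.card C = q ^ Module.finrank F C := by
    rw [Nat.card_eq_fintype_card, Module.card_eq_pow_finrank (K := F), hq]
  set dC := Module.finrank F C with hdC
  set dM := Module.finrank F (Fin t → Matrix (Fin n) (Fin n) F) with hdM
  have hle : dC ≤ dM := Submodule.finrank_le C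
  have hVpow : ballVol F t n n 2 = q ^ (dM - dC) := by
    rw [hCcard, hMcard] at hperf
    have hmul : q ^ dC * ballVol F t n n 2 = q ^ dC * q ^ (dM - dC) := by
      rw [hperf, ← pow_add, Nat.add_sub_cancel' hle]
    exact Nat.eq_of_mul_eq_mul_left (by positivity) hmul
  -- the volume is at least 2
  have hV2 : 2 ≤ ballVol F t n n 2 := by
    rw [hVcard]
    rw [show (2 : ℕ) = 1 + 1 by rfl]
    apply Nat.succ_le_of_lt
    rw [Nat.lt_iff_add_one_le, Nat.add_comm]
    apply Nat.succ_le_of_lt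
    apply Finset.one_lt_card.mpr
    refine ⟨0, ?_, (fun i : Fin t => Matrix.single (0 : Fin n) (0 : Fin n)
      ((Pi.single (0 : Fin t) (1 : F) : Fin t → F) i)), ?_, ?_⟩
    · rw [Finset.mem_filter]
      refine ⟨Finset.mem_univ _, ?_⟩
      have : sumRankW (0 : Fin t → Matrix (Fin n) (Fin n) F) = 0 := by
        unfold sumRankW
        simp [Matrix.rank_zero]
      omega
    · rw [Finset.mem_filter]
      refine ⟨Finset.mem_univ _, ?_⟩
      rw [SumRankAux3.sumRank_form]
      have : (Finset.univ.filter fun i : Fin t =>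
            (Pi.single (0 : Fin t) (1 : F) : Fin t → F) i ≠ (0 : F))
          = {(0 : Fin t)} := by
        ext i
        rcases eq_or_ne i 0 with rfl | hi
        · simp
        · simp [Pi.single_apply, hi]
      rw [this, Finset.card_singleton]
      omega
    · intro hcontra
      have := congrFun (congrFun (congrFun hcontra.symm 0) 0) 0
      rw [Pi.single_eq_same, Matrix.single_apply_same] at this
      exact one_ne_zero this
  -- q divides the volume
  have hk0 : dM - dC ≠ 0 := by
    intro h
    rw [h, pow_zero] at hVpow
    omega
  have hdvdV : q ∣ ballVol F t n n 2 := by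
    rw [hVpow]
    exact dvd_pow_self q hk0
  -- modular computation of the volume
  have hmod := SumRankAux3.ball_modEq_hamming (F := F) (t := t) (n := n)
  rw [SumRankAux3.hamming_card, hq] at hmod
  have hdvdH : q ∣ ∑ k ∈ Finset.range 3, t.choose k * (q - 1)^k := by
    rw [← Nat.modEq_zero_iff_dvd]
    refine Nat.ModEq.trans hmod.symm ?_
    rw [Nat.modEq_zero_iff_dvd, ← hVcard]
    exact hdvdV
  -- rewrite the sum
  have hsum : (∑ k ∈ Finset.range 3, t.choose k * (q - 1)^k)
      = 1 + t * (q - 1) + t.choose 2 * ((q - 1) * (q - 1)) := by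
    rw [Finset.sum_range_succ, Finset.sum_range_succ, Finset.sum_range_one,
      Nat.choose_zero_right, Nat.choose_one_right]
    ring
  rw [hsum] at hdvdH
  -- pass to ZMod q
  have h0 : ((1 + t * (q - 1) + t.choose 2 * ((q - 1) * (q - 1)) : ℕ) : ZMod q) = 0 :=
    (ZMod.natCast_eq_zero_iff _ _).mpr hdvdH
  have hq1 : ((q - 1 : ℕ) : ZMod q) = -1 := by
    have h : ((q - 1 : ℕ) : ZMod q) + 1 = 0 := by
      have h2 : ((q - 1 : ℕ) : ZMod q) + ((1 : ℕ) : ZMod q) = ((q - 1 + 1 : ℕ) : ZMod q) := by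
        push_cast
        ring
      rw [Nat.cast_one] at h2
      rw [h2, Nat.sub_add_cancel (by omega), ZMod.natCast_self]
    exact eq_neg_of_add_eq_zero_left h
  rw [Nat.cast_add, Nat.cast_add, Nat.cast_mul, Nat.cast_mul, Nat.cast_mul, Nat.cast_one,
    hq1] at h0
  have hch : ((2 : ℕ) : ZMod q) * (t.choose 2 : ZMod q) = (t : ZMod q) * ((t : ZMod q) - 1) := by
    have hnat : 2 * t.choose 2 = t * (t - 1) := by
      rw [Nat.choose_two_right]
      refine Nat.mul_div_cancel' ?_
      rcases Nat.even_or_odd t with he | ho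
      · exact (he.mul_right _).two_dvd
      · have : Even (t - 1) := by
          rcases ho with ⟨m, hm⟩
          exact ⟨m, by omega⟩
        exact (this.mul_left _).two_dvd
    have := congrArg (fun m : ℕ => (m : ZMod q)) hnat
    simp only [Nat.cast_mul] at this
    rw [this, Nat.cast_sub ht, Nat.cast_one]
  have key : ((t : ZMod q) - 1) * ((t : ZMod q) - 2) = 0 := by
    have h2 : ((2 : ℕ) : ZMod q) = (2 : ZMod q) := by norm_cast
    rw [h2] at hch
    linear_combination (2 : ZMod q) * h0 - hch
  -- transfer to ℤ
  have hkey2 : (q : ℤ) ∣ ((t : ℤ) - 1) * ((t : ℤ) - 2) := by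
    refine (ZMod.intCast_zmod_eq_zero_iff_dvd _ _).mp ?_
    push_cast
    exact key
  -- q is a prime power
  obtain ⟨e, hp, hcard⟩ := FiniteField.card F (ringChar F)
  have hqe : (q : ℤ) = ((ringChar F : ℕ) : ℤ) ^ (e : ℕ) := by
    rw [← hq, hcard]
    push_cast
    ring
  have hprime : Prime ((ringChar F : ℕ) : ℤ) := Nat.prime_iff_prime_int.mp hp
  by_cases hdp : ((ringChar F : ℕ) : ℤ) ∣ ((t : ℤ) - 1)
  · have hnd : ¬ ((ringChar F : ℕ) : ℤ) ∣ ((t : ℤ) - 2) := by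
      intro hd2
      have h1 : ((ringChar F : ℕ) : ℤ) ∣ 1 := by
        have := dvd_sub hdp hd2
        simpa using this
      exact hprime.not_unit (isUnit_of_dvd_one h1)
    have hq1dvd : (q : ℤ) ∣ (t : ℤ) - 1 := by
      rw [hqe]
      exact hprime.pow_dvd_of_dvd_mul_right _ hnd (hqe ▸ hkey2)
    refine ht1 ?_
    rw [Nat.modEq_iff_dvd]
    have : ((1 : ℕ) : ℤ) - (t : ℤ) = -((t : ℤ) - 1) := by push_cast; ring
    rw [this]
    exact (dvd_neg).mpr hq1dvd
  · have hq2dvd : (q : ℤ) ∣ (t : ℤ) - 2 := by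
      rw [hqe]
      exact hprime.pow_dvd_of_dvd_mul_left _ hdp (hqe ▸ hkey2)
    refine ht2 ?_
    rw [Nat.modEq_iff_dvd]
    have : ((2 : ℕ) : ℤ) - (t : ℤ) = -((t : ℤ) - 2) := by push_cast; ring
    rw [this]
    exact (dvd_neg).mpr hq2dvd
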